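/- For the Laplacian L of a finite simple graph with incidence matrix C (so L = C^T C), det(I + L) = Σ_P det(C_P)^2, where the sum is over all square patterns P of C including the empty pattern contributing 1. -/

import Mathlib

open Matrix SimpleGraph

/-- `C` is a signed vertex-edge incidence matrix: each row (edge) has exactly
one `+1` entry and one `-1` entry (at the two endpoints) and zeros elsewhere. -/
def IsSignedIncidence {m n : ℕ} (C : Matrix (Fin m) (Fin n) ℤ) : Prop :=
  ∀ e : Fin m, ∃ i j : Fin n, i ≠ j ∧ C e i = 1 ∧ C e j = -1 ∧
    ∀ v : Fin n, v ≠ i → v ≠ j → C e v = 0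

namespace CauchyBinetAux

open Finset

variable {R : Type*} [CommRing R] {n m k : ℕ}

lemma det_piecewise_one (M : Matrix (Fin n) (Fin n) R) (s : Finset (Fin n)) :
    Matrix.detRowAlternating
        (s.piecewise (fun i => M i) (fun i => (1 : Matrix (Fin n) (Fin n) R) i))
      = (M.submatrix (s.orderEmbOfFin rfl) (s.orderEmbOfFin rfl)).det := by
  classical
  set P : Matrix (Fin n) (Fin n) R :=
    Matrix.of (s.piecewise (fun i => M i) (fun i => (1 : Matrix (Fin n) (Fin n) R) i)) with hPdef
  have hdet : Matrix.detRowAlternating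
      (s.piecewise (fun i => M i) (fun i => (1 : Matrix (Fin n) (Fin n) R) i)) = P.det := rfl
  rw [hdet]
  let e : {x // x ∈ s} ⊕ {x // ¬ x ∈ s} ≃ Fin n := Equiv.sumCompl (· ∈ s)
  have h1 : P.det = (P.submatrix e e).det := (Matrix.det_submatrix_equiv_self e P).symm
  have hblocks : P.submatrix e e =
      Matrix.fromBlocks
        (Matrix.of fun (a b : {x // x ∈ s}) => M a.1 b.1)
        (Matrix.of fun (a : {x // x ∈ s}) (b : {x // ¬ x ∈ s}) => M a.1 b.1)
        0 1 := by
    ext i j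
    cases i with
    | inl a =>
      cases j with
      | inl b =>
        simp [P, e, Finset.piecewise_eq_of_mem _ _ _ a.2]
      | inr b =>
        simp [P, e, Finset.piecewise_eq_of_mem _ _ _ a.2]
    | inr a =>
      cases j with
      | inl b =>
        have hab : (a.1 : Fin n) ≠ b.1 := fun hab => a.2 (hab ▸ b.2)
        simp [P, e, Finset.piecewise_eq_of_notMem _ _ _ a.2, Matrix.one_apply, hab]
      | inr b =>
        simp [P, e, Finset.piecewise_eq_of_notMem _ _ _ a.2, Matrix.one_apply,
          Subtype.ext_iff]
  rw [h1, hblocks, Matrix.det_fromBlocks_zero₂₁, Matrix.det_one, mul_one]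
  let e2 : Fin s.card ≃ {x // x ∈ s} := (s.orderIsoOfFin rfl).toEquiv
  rw [← Matrix.det_submatrix_equiv_self e2]
  have hsub : ((Matrix.of fun (a b : {x // x ∈ s}) => M a.1 b.1).submatrix e2 e2)
      = M.submatrix (s.orderEmbOfFin rfl) (s.orderEmbOfFin rfl) := by
    ext i j
    simp [e2, Matrix.submatrix_apply, Finset.coe_orderIsoOfFin_apply]
  rw [hsub]

lemma det_one_add_eq_sum_principal (M : Matrix (Fin n) (Fin n) R) :
    (1 + M).det =
      ∑ s : Finset (Fin n), (M.submatrix (s.orderEmbOfFin rfl) (s.orderEmbOfFin rfl)).det := by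
  classical
  have h0 : (1 + M).det
      = Matrix.detRowAlternating
          ((fun i => M i) + (fun i => (1 : Matrix (Fin n) (Fin n) R) i)) := by
    rw [add_comm]
    rfl
  exact h0.trans
    ((Matrix.detRowAlternating.toMultilinearMap.map_add_univ (fun i => M i)
        (fun i => (1 : Matrix (Fin n) (Fin n) R) i)).trans
      (Finset.sum_congr rfl fun s _ => det_piecewise_one M s))

noncomputable def permOf (I : Finset (Fin m)) (h : I.card = k) (r : Fin k → Fin m)
    (himg : ∀ x, r x ∈ I) (hinj : Function.Injective r) : Equiv.Perm (Fin k) :=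
  Equiv.ofBijective (fun x => (I.orderIsoOfFin h).symm ⟨r x, himg x⟩)
    (Finite.injective_iff_bijective.mp (fun a b hab => hinj (by
      have := congrArg (fun y => ((I.orderIsoOfFin h) y : Fin m)) hab
      simpa using this)))

lemma permOf_spec (I : Finset (Fin m)) (h : I.card = k) (r : Fin k → Fin m)
    (himg : ∀ x, r x ∈ I) (hinj : Function.Injective r) (x : Fin k) :
    I.orderEmbOfFin h (permOf I h r himg hinj x) = r x := by
  rw [← Finset.coe_orderIsoOfFin_apply]
  simp [permOf]

lemma sum_inj_eq (I : Finset (Fin m)) (h : I.card = k) (F : (Fin k → Fin m) → R) :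
    ∑ r ∈ Finset.univ.filter
        (fun r : Fin k → Fin m => Finset.image r Finset.univ = I ∧ Function.Injective r),
      F r = ∑ τ : Equiv.Perm (Fin k), F (I.orderEmbOfFin h ∘ τ) := by
  classical
  have hmemI : ∀ (r : Fin k → Fin m), Finset.image r Finset.univ = I → ∀ x, r x ∈ I := by
    intro r hr x
    rw [← hr]
    exact Finset.mem_image_of_mem r (Finset.mem_univ x)
  apply Finset.sum_bij'
    (i := fun r hr => permOf I h r
      (hmemI r (Finset.mem_filter.mp hr).2.1) (Finset.mem_filter.mp hr).2.2)
    (j := fun τ _ => I.orderEmbOfFin h ∘ τ)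
  case hi => intro r hr; exact Finset.mem_univ _
  case hj =>
    intro τ _
    rw [Finset.mem_filter]
    refine ⟨Finset.mem_univ _, ?_, (I.orderEmbOfFin h).injective.comp τ.injective⟩
    apply Finset.coe_injective
    rw [Finset.coe_image, Finset.coe_univ, Set.image_univ, Set.range_comp,
      Equiv.range_eq_univ, Set.image_univ, Finset.range_orderEmbOfFin]
  case left_neg =>
    intro r hr
    funext x
    exact permOf_spec I h r _ _ x
  case right_neg =>
    intro τ _
    apply Equiv.ext
    intro x
    apply (I.orderEmbOfFin h).injective
    rw [permOf_spec]
    rfl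
  case h =>
    intro r hr
    exact congrArg F (funext fun x => (permOf_spec I h r _ _ x).symm)

lemma sum_fun_eq (F : (Fin k → Fin m) → R) (hF : ∀ r, ¬ Function.Injective r → F r = 0) :
    ∑ r : Fin k → Fin m, F r
      = ∑ I : Finset (Fin m),
          if h : I.card = k then ∑ τ : Equiv.Perm (Fin k), F (I.orderEmbOfFin h ∘ τ)
          else 0 := by
  classical
  rw [← Finset.sum_fiberwise Finset.univ
    (fun r : Fin k → Fin m => Finset.image r Finset.univ) F]
  apply Finset.sum_congr rfl
  intro I _
  by_cases h : I.card = k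
  · rw [dif_pos h, ← sum_inj_eq I h F]
    apply (Finset.sum_subset ?_ ?_).symm
    · intro r hr
      rw [Finset.mem_filter] at hr ⊢
      exact ⟨hr.1, hr.2.1⟩
    · intro r hr hr2
      rw [Finset.mem_filter] at hr hr2
      apply hF
      intro hinj
      exact hr2 ⟨hr.1, hr.2, hinj⟩
  · rw [dif_neg h]
    apply Finset.sum_eq_zero
    intro r hr
    have himg := (Finset.mem_filter.mp hr).2
    apply hF
    intro hinj
    exact h (by rw [← himg, Finset.card_image_of_injective _ hinj, Finset.card_univ,
      Fintype.card_fin])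

lemma det_transpose_mul_self (B : Matrix (Fin m) (Fin k) R) :
    (Bᵀ * B).det = ∑ I : Finset (Fin m),
      if h : I.card = k then (B.submatrix (I.orderEmbOfFin h) id).det ^ 2 else 0 := by
  classical
  have hrow : (Bᵀ * B : Matrix (Fin k) (Fin k) R)
      = Matrix.of (fun i => ∑ e : Fin m, B e i • (B e)) := by
    ext i j
    simp [Matrix.mul_apply, Finset.sum_apply, mul_comm]
  have expand : (Bᵀ * B).det
      = ∑ r : Fin k → Fin m, (∏ i, B (r i) i) * (B.submatrix r id).det := by
    rw [hrow]
    have h1 := (Matrix.detRowAlternating (n := Fin k) (R := R)).toMultilinearMap.map_sum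
      (g := fun i (e : Fin m) => B e i • B e)
    refine h1.trans (Finset.sum_congr rfl fun r _ => ?_)
    have h2 := (Matrix.detRowAlternating (n := Fin k) (R := R)).toMultilinearMap.map_smul_univ
      (fun i => B (r i) i) (fun i => B (r i))
    rw [show (Matrix.detRowAlternating (n := Fin k) (R := R)).toMultilinearMap
        (fun i => B (r i) i • B (r i)) = _ from h2, smul_eq_mul]
    rfl
  rw [expand]
  rw [sum_fun_eq (fun r => (∏ i, B (r i) i) * (B.submatrix r id).det) ?hzero]
  case hzero =>
    intro r hinj
    obtain ⟨a, b, hab, hne⟩ := Function.not_injective_iff.mp hinj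
    have hdet0 : (B.submatrix r id).det = 0 :=
      Matrix.det_zero_of_row_eq hne (funext fun j => by
        simp [Matrix.submatrix_apply, hab])
    show (∏ i, B (r i) i) * (B.submatrix r id).det = 0
    rw [hdet0, mul_zero]
  apply Finset.sum_congr rfl
  intro I _
  by_cases h : I.card = k
  · rw [dif_pos h, dif_pos h]
    have hτ : ∀ τ : Equiv.Perm (Fin k),
        (∏ i, B ((I.orderEmbOfFin h ∘ τ) i) i) * (B.submatrix (I.orderEmbOfFin h ∘ τ) id).det
          = ((Equiv.Perm.sign τ : ℤ) : R)
              * ((∏ i, (B.submatrix (I.orderEmbOfFin h) id) (τ i) i)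
                  * (B.submatrix (I.orderEmbOfFin h) id).det) := by
      intro τ
      have : (B.submatrix (I.orderEmbOfFin h ∘ τ) id)
          = (B.submatrix (I.orderEmbOfFin h) id).submatrix τ id := by
        ext i j; simp
      rw [this, Matrix.det_permute]
      simp only [Matrix.submatrix_apply, Function.comp_apply, id_eq]
      ring
    rw [Finset.sum_congr rfl fun τ _ => hτ τ]
    have hre : ∑ τ : Equiv.Perm (Fin k), ((Equiv.Perm.sign τ : ℤ) : R)
          * ((∏ i, (B.submatrix (I.orderEmbOfFin h) id) (τ i) i)
              * (B.submatrix (I.orderEmbOfFin h) id).det)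
        = (∑ τ : Equiv.Perm (Fin k), ((Equiv.Perm.sign τ : ℤ) : R)
            * ∏ i, (B.submatrix (I.orderEmbOfFin h) id) (τ i) i)
          * (B.submatrix (I.orderEmbOfFin h) id).det := by
      rw [Finset.sum_mul]
      exact Finset.sum_congr rfl fun τ _ => by ring
    rw [hre, ← Matrix.det_apply', sq]
  · rw [dif_neg h, dif_neg h]


end CauchyBinetAux

open CauchyBinetAux in
theorem det_one_add_lapMatrix_eq_sum_sq_incidence_minors
    {m n : ℕ} (G : SimpleGraph (Fin n)) [DecidableRel G.Adj]
    (C : Matrix (Fin m) (Fin n) ℤ) (hC : IsSignedIncidence C)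
    (hL : Cᵀ * C = G.lapMatrix ℤ) :
    (1 + G.lapMatrix ℤ).det =
      ∑ I : Finset (Fin m), ∑ J : Finset (Fin n),
        (if h : I.card = J.card then
          ((C.submatrix (I.orderEmbOfFin h) (J.orderEmbOfFin rfl)).det) ^ 2
        else 0) := by
  classical
  rw [← hL, det_one_add_eq_sum_principal]
  have hJ : ∀ J : Finset (Fin n),
      ((Cᵀ * C).submatrix (J.orderEmbOfFin rfl) (J.orderEmbOfFin rfl)).det
        = ∑ I : Finset (Fin m),
            (if h : I.card = J.card then
              ((C.submatrix (I.orderEmbOfFin h) (J.orderEmbOfFin rfl)).det) ^ 2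
            else 0) := by
    intro J
    have h1 : (Cᵀ * C).submatrix (J.orderEmbOfFin rfl) (J.orderEmbOfFin rfl)
        = (C.submatrix id (J.orderEmbOfFin rfl))ᵀ * (C.submatrix id (J.orderEmbOfFin rfl)) := by
      ext i j
      simp [Matrix.mul_apply]
    rw [h1, det_transpose_mul_self]
    apply Finset.sum_congr rfl
    intro I _
    by_cases h : I.card = J.card
    · rw [dif_pos h, dif_pos h]
      congr 1
    · rw [dif_neg h, dif_neg h]
  rw [Finset.sum_congr rfl fun J _ => hJ J, Finset.sum_comm]
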